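/- arXiv:2403.01330 — 7 statements merged into one kernel-verified Lean document; each statement's English description precedes it below -/
import Mathlib

section
/- An optimal propensity score match contains no crossing matches: if T and C are finite disjoint sets of units with distinct real propensity scores and μ : T → C is an optimal pair matching, then there exist no two distinct treated units t₁, t₂ ∈ T such that the matched pairs (t₁, μ(t₁)) and (t₂, μ(t₂)) form a crossing match. -/
/-- `μ` is a pair matching of the treated units `T` to the control units `C`:
an injection (on `T`) mapping each treated unit to a control unit. -/
def IsMatching {α : Type*} (T C : Finset α) (μ : α → α) : Prop :=
  Set.InjOn μ ↑T ∧ ∀ t ∈ T, μ t ∈ C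

/-- The cost of a pair matching: the total absolute propensity-score
discrepancy `Σ_{t ∈ T} |λ_t − λ_{μ(t)}|`. -/
noncomputable def matchCost {α : Type*} (score : α → ℝ) (T : Finset α) (μ : α → α) : ℝ :=
  ∑ t ∈ T, |score t - score (μ t)|

/-- `μ` is an optimal pair matching of `T` to `C`: it is a pair matching and
it minimizes the cost over all pair matchings of `T` to `C`. -/
def IsOptimalMatching {α : Type*} (score : α → ℝ) (T C : Finset α) (μ : α → α) : Prop :=
  IsMatching T C μ ∧
    ∀ ν : α → α, IsMatching T C ν → matchCost score T μ ≤ matchCost score T ν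

/-- Two matched pairs with treated scores `t1, t2` and control scores `c1, c2`
form a crossing match if `max{t1, c2} < min{c1, t2}` or `max{t2, c1} < min{c2, t1}`. -/
def CrossingMatch (t1 c1 t2 c2 : ℝ) : Prop :=
  max t1 c2 < min c1 t2 ∨ max t2 c1 < min c2 t1

private lemma uncross_key (a b c d : ℝ) (h1 : a < b) (h2 : a < c) (h3 : d < b) (h4 : d < c) :
    |a - d| + |c - b| < |a - b| + |c - d| := by
  rw [abs_of_neg (by linarith : a - b < 0), abs_of_pos (by linarith : (0:ℝ) < c - d)]
  rcases abs_cases (a - d) with ⟨e1, _⟩ | ⟨e1, _⟩ <;>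
    rcases abs_cases (c - b) with ⟨e2, _⟩ | ⟨e2, _⟩ <;> linarith

/-- An optimal propensity score match contains no crossing matches (Lemma S1,
from Sävje 2021): if `T` and `C` are finite disjoint sets of units with
distinct propensity scores and `μ` is an optimal pair matching of `T` to `C`,
then no two distinct treated units have matched pairs forming a crossing match. -/
theorem optimal_match_no_crossing {α : Type*}
    (score : α → ℝ) (T C : Finset α)
    (hdisj : Disjoint T C)
    (hinj : Set.InjOn score (↑T ∪ ↑C))
    (μ : α → α) (hopt : IsOptimalMatching score T C μ) :
    ¬ ∃ t1 ∈ T, ∃ t2 ∈ T, t1 ≠ t2 ∧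
        CrossingMatch (score t1) (score (μ t1)) (score t2) (score (μ t2)) := by
  classical
  rintro ⟨t1, ht1, t2, ht2, hne, hcross⟩
  set σ := Equiv.swap t1 t2 with hσ
  set ν : α → α := fun x => μ (σ x) with hν
  have hmapT : ∀ z ∈ T, σ z ∈ T := by
    intro z hz
    rcases eq_or_ne z t1 with rfl | h1
    · simpa [hσ] using ht2
    rcases eq_or_ne z t2 with rfl | h2
    · simpa [hσ] using ht1
    · simpa [hσ, Equiv.swap_apply_of_ne_of_ne h1 h2] using hz
  have hνmatch : IsMatching T C ν := by
    constructor
    · intro x hx y hy hxy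
      have := hopt.1.1 (hmapT x hx) (hmapT y hy) hxy
      exact σ.injective this
    · intro t ht
      exact hopt.1.2 _ (hmapT t ht)
  have hsum : ∀ f : α → ℝ, ∑ t ∈ T, f t = f t1 + f t2 + ∑ t ∈ (T.erase t1).erase t2, f t := by
    intro f
    rw [← Finset.add_sum_erase _ f ht1,
      ← Finset.add_sum_erase _ f (Finset.mem_erase.mpr ⟨hne.symm, ht2⟩)]
    ring
  have hσt1 : σ t1 = t2 := Equiv.swap_apply_left t1 t2
  have hσt2 : σ t2 = t1 := Equiv.swap_apply_right t1 t2
  have htail : ∑ t ∈ (T.erase t1).erase t2, |score t - score (ν t)|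
      = ∑ t ∈ (T.erase t1).erase t2, |score t - score (μ t)| := by
    apply Finset.sum_congr rfl
    intro x hx
    have h2 : x ≠ t2 := (Finset.mem_erase.mp hx).1
    have h1 : x ≠ t1 := (Finset.mem_erase.mp (Finset.mem_erase.mp hx).2).1
    simp [hν, hσ, Equiv.swap_apply_of_ne_of_ne h1 h2]
  have hkey : |score t1 - score (ν t1)| + |score t2 - score (ν t2)|
      < |score t1 - score (μ t1)| + |score t2 - score (μ t2)| := by
    have e1 : ν t1 = μ t2 := by simp [hν, hσt1]
    have e2 : ν t2 = μ t1 := by simp [hν, hσt2]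
    rw [e1, e2]
    rcases hcross with h | h
    · rw [max_lt_iff, lt_min_iff, lt_min_iff] at h
      exact uncross_key (score t1) (score (μ t1)) (score t2) (score (μ t2))
        h.1.1 h.1.2 h.2.1 h.2.2
    · rw [max_lt_iff, lt_min_iff, lt_min_iff] at h
      have := uncross_key (score t2) (score (μ t2)) (score t1) (score (μ t1))
        h.1.1 h.1.2 h.2.1 h.2.2
      linarith
  have hlt : matchCost score T ν < matchCost score T μ := by
    unfold matchCost
    rw [hsum (fun t => |score t - score (ν t)|), hsum (fun t => |score t - score (μ t)|)]
    rw [htail]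
    have := hkey
    linarith
  exact absurd (hopt.2 ν hνmatch) (not_le.mpr hlt)
end

section
/- If two matched pairs (t₁, c₁) and (t₂, c₂) (with treated units t₁, t₂, control units c₁, c₂, and four distinct real propensity scores) are overlapping and do not form a crossing match, then the treated–control score differences have the same sign in both pairs: (λ_{t₁} − λ_{c₁}) and (λ_{t₂} − λ_{c₂}) are either both positive or both negative. -/
/-- Two matched pairs, with respective score pairs `(x1, y1)` and `(x2, y2)`, are
overlapping if, writing each pair's scores as `(hᵢ, ℓᵢ)` with `hᵢ > ℓᵢ`,
either `h1 > h2 > ℓ1` or `h2 > h1 > ℓ2`. -/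
def Overlapping (x1 y1 x2 y2 : ℝ) : Prop :=
  (max x1 y1 > max x2 y2 ∧ max x2 y2 > min x1 y1) ∨
  (max x2 y2 > max x1 y1 ∧ max x1 y1 > min x2 y2)

/-- If two matched pairs `(t1, c1)` and `(t2, c2)` with four distinct propensity
scores are overlapping and do not form a crossing match, then the treated–control
score differences have the same sign in both pairs. -/
theorem overlapping_not_crossing_same_sign
    (lt1 lc1 lt2 lc2 : ℝ)
    (h1 : lt1 ≠ lc1) (h2 : lt1 ≠ lt2) (h3 : lt1 ≠ lc2)
    (h4 : lc1 ≠ lt2) (h5 : lc1 ≠ lc2) (h6 : lt2 ≠ lc2)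
    (hover : Overlapping lt1 lc1 lt2 lc2)
    (hnocross : ¬ CrossingMatch lt1 lc1 lt2 lc2) :
    (0 < lt1 - lc1 ∧ 0 < lt2 - lc2) ∨ (lt1 - lc1 < 0 ∧ lt2 - lc2 < 0) := by
  rcases lt_or_gt_of_ne h1 with a|a <;> rcases lt_or_gt_of_ne h6 with b|b
  · right; exact ⟨by linarith, by linarith⟩
  · -- lt1 < lc1, lc2 < lt2 : mixed, derive crossing (first disjunct)
    exfalso; apply hnocross; left
    simp only [Overlapping, max_eq_right a.le, min_eq_left a.le,
      max_eq_left b.le, min_eq_right b.le, gt_iff_lt] at hover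
    simp only [max_lt_iff, lt_min_iff]
    rcases hover with ⟨p, q⟩ | ⟨p, q⟩ <;>
      exact ⟨⟨by linarith, by linarith⟩, by linarith, by linarith⟩
  · -- lc1 < lt1, lt2 < lc2 : mixed, derive crossing (second disjunct)
    exfalso; apply hnocross; right
    simp only [Overlapping, max_eq_left a.le, min_eq_right a.le,
      max_eq_right b.le, min_eq_left b.le, gt_iff_lt] at hover
    simp only [max_lt_iff, lt_min_iff]
    rcases hover with ⟨p, q⟩ | ⟨p, q⟩ <;>
      exact ⟨⟨by linarith, by linarith⟩, by linarith, by linarith⟩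
  · left; exact ⟨by linarith, by linarith⟩
end

section
/- Suppose two matched pairs (t₁, c₁) and (t₂, c₂) (treated units t₁, t₂, control units c₁, c₂, four distinct real propensity scores) are overlapping and do not form a crossing match. Then exchanging the treated and control roles within exactly one of the two pairs produces pairs that do form a crossing match: the pairs (c₁, t₁) and (t₂, c₂) form a crossing match, and likewise the pairs (t₁, c₁) and (c₂, t₂) form a crossing match. -/
set_option maxHeartbeats 1000000 in
/-- If two matched pairs `(t1, c1)` and `(t2, c2)` with four distinct propensity
scores are overlapping and do not form a crossing match, then exchanging the
treated and control roles within exactly one of the two pairs produces pairs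
that do form a crossing match. -/
theorem overlapping_single_flip_creates_crossing
    (lt1 lc1 lt2 lc2 : ℝ)
    (h1 : lt1 ≠ lc1) (h2 : lt1 ≠ lt2) (h3 : lt1 ≠ lc2)
    (h4 : lc1 ≠ lt2) (h5 : lc1 ≠ lc2) (h6 : lt2 ≠ lc2)
    (hover : Overlapping lt1 lc1 lt2 lc2)
    (hnocross : ¬ CrossingMatch lt1 lc1 lt2 lc2) :
    CrossingMatch lc1 lt1 lt2 lc2 ∧ CrossingMatch lt1 lc1 lc2 lt2 := by
  simp only [CrossingMatch, Overlapping, gt_iff_lt, max_lt_iff, lt_max_iff, lt_min_iff,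
    min_lt_iff] at hover hnocross ⊢
  rcases h1.lt_or_gt with e1 | e1 <;> rcases h2.lt_or_gt with e2 | e2 <;>
    rcases h3.lt_or_gt with e3 | e3 <;> rcases h4.lt_or_gt with e4 | e4 <;>
    rcases h5.lt_or_gt with e5 | e5 <;> rcases h6.lt_or_gt with e6 | e6 <;>
    constructor <;>
    first
      | (left; exact ⟨⟨by linarith, by linarith⟩, by linarith, by linarith⟩)
      | (right; exact ⟨⟨by linarith, by linarith⟩, by linarith, by linarith⟩)
      | (exfalso; apply hnocross
         first
           | (left; exact ⟨⟨by linarith, by linarith⟩, by linarith, by linarith⟩)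
           | (right; exact ⟨⟨by linarith, by linarith⟩, by linarith, by linarith⟩))
      | (exfalso; rcases hover with ⟨⟨ha1, ha2⟩ | ⟨ha1, ha2⟩, hb⟩ | ⟨⟨ha1, ha2⟩ | ⟨ha1, ha2⟩, hb⟩ <;>
          rcases hb with (hb1 | hb1) | (hb1 | hb1) <;> linarith)
end

section
/- Consider four units t₁, t₂, c₁, c₂ with distinct real propensity scores, with treated set T = {t₁, t₂} and control set C = {c₁, c₂}, and suppose the pairing grouping {t₁, c₁} and {t₂, c₂} is an optimal pair matching of T to C. (i) If the two pairs are not overlapping, then for every within-pair exchange of treated and control roles (none, the first pair only, the second pair only, or both pairs) the same grouping {t₁, c₁}, {t₂, c₂} remains an optimal pair matching of the new treated set to the new control set. (ii) If the two pairs are overlapping, the grouping remains an optimal pair matching when neither pair or both pairs have their roles exchanged, but it is not optimal when exactly one pair has its roles exchanged. -/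
lemma isMatching_pair {α : Type*} [DecidableEq α] {p q r s : α} (hpq : p ≠ q) (hrs : r ≠ s)
    {ν : α → α} (hp : ν p = r) (hq : ν q = s) : IsMatching {p, q} {r, s} ν := by
  constructor
  · intro x hx y hy hxy
    simp only [Finset.coe_insert, Set.mem_insert_iff, Finset.coe_singleton,
      Set.mem_singleton_iff] at hx hy
    rcases hx with rfl | rfl <;> rcases hy with rfl | rfl <;>
      first
        | rfl
        | (rw [hp, hq] at hxy; exact absurd hxy hrs)
        | (rw [hp, hq] at hxy; exact absurd hxy.symm hrs)
  · intro t ht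
    rcases Finset.mem_insert.mp ht with rfl | ht'
    · rw [hp]; exact Finset.mem_insert_self _ _
    · rw [Finset.mem_singleton.mp ht', hq]
      exact Finset.mem_insert_of_mem (Finset.mem_singleton_self s)

lemma opt_iff {α : Type*} [DecidableEq α] (score : α → ℝ) {p q r s : α}
    (hpq : p ≠ q) (hrs : r ≠ s) {ν : α → α} (hp : ν p = r) (hq : ν q = s) :
    IsOptimalMatching score {p, q} {r, s} ν ↔
      |score p - score r| + |score q - score s| ≤
        |score p - score s| + |score q - score r| := by
  constructor
  · rintro ⟨hm, hmin⟩
    have hm' : IsMatching {p, q} {r, s} (fun x => if x = p then s else r) := by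
      rw [Finset.pair_comm r s]
      exact isMatching_pair hpq hrs.symm (by simp) (by simp [Ne.symm hpq])
    have H := hmin _ hm'
    rw [matchCost, matchCost, Finset.sum_pair hpq, Finset.sum_pair hpq, hp, hq] at H
    simpa [Ne.symm hpq] using H
  · intro hle
    refine ⟨isMatching_pair hpq hrs hp hq, fun ν' hm' => ?_⟩
    have hp' := hm'.2 p (Finset.mem_insert_self _ _)
    have hq' := hm'.2 q (Finset.mem_insert_of_mem (Finset.mem_singleton_self q))
    rw [Finset.mem_insert, Finset.mem_singleton] at hp' hq'
    rw [matchCost, matchCost, Finset.sum_pair hpq, Finset.sum_pair hpq, hp, hq]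
    rcases hp' with hp' | hp' <;> rcases hq' with hq' | hq'
    · exact absurd (hm'.1 (by simp) (by simp) (by rw [hp', hq'])) hpq
    · rw [hp', hq']
    · rw [hp', hq']; exact hle
    · exact absurd (hm'.1 (by simp) (by simp) (by rw [hp', hq'])) hpq

set_option maxHeartbeats 4000000 in
lemma key_ineq (a b c d : ℝ) (hab : a ≠ b) (hac : a ≠ c) (had : a ≠ d)
    (hbc : b ≠ c) (hbd : b ≠ d) (hcd : c ≠ d)
    (hE : |a - b| + |c - d| ≤ |a - d| + |c - b|) :
    (¬ Overlapping a b c d → |a - b| + |c - d| ≤ |a - c| + |b - d|) ∧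
    (Overlapping a b c d → |a - c| + |b - d| < |a - b| + |c - d|) := by
  constructor
  · intro hno
    simp only [Overlapping] at hno
    push_neg at hno
    have hmm : max a b ≠ max c d := by
      rcases max_choice a b with e | e <;> rcases max_choice c d with e' | e' <;>
        rw [e, e'] <;> assumption
    have l1 := le_max_left a b; have l2 := le_max_right a b
    have l3 := le_max_left c d; have l4 := le_max_right c d
    have l5 := min_le_left a b; have l6 := min_le_right a b
    have l7 := min_le_left c d; have l8 := min_le_right c d
    rcases lt_or_gt_of_ne hmm with hm | hm
    · have hsep := hno.2 hm
      rcases abs_cases (a - b) with ⟨f1, g1⟩ | ⟨f1, g1⟩ <;>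
      rcases abs_cases (c - d) with ⟨f2, g2⟩ | ⟨f2, g2⟩ <;>
      rcases abs_cases (a - c) with ⟨f3, g3⟩ | ⟨f3, g3⟩ <;>
      rcases abs_cases (b - d) with ⟨f4, g4⟩ | ⟨f4, g4⟩ <;>
        rw [f1, f2, f3, f4] <;> linarith
    · have hsep := hno.1 hm
      rcases abs_cases (a - b) with ⟨f1, g1⟩ | ⟨f1, g1⟩ <;>
      rcases abs_cases (c - d) with ⟨f2, g2⟩ | ⟨f2, g2⟩ <;>
      rcases abs_cases (a - c) with ⟨f3, g3⟩ | ⟨f3, g3⟩ <;>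
      rcases abs_cases (b - d) with ⟨f4, g4⟩ | ⟨f4, g4⟩ <;>
        rw [f1, f2, f3, f4] <;> linarith
  · intro hov
    simp only [Overlapping] at hov
    rcases max_cases a b with ⟨e1, i1⟩ | ⟨e1, i1⟩ <;>
    rcases min_cases a b with ⟨e2, i2⟩ | ⟨e2, i2⟩ <;>
    rcases max_cases c d with ⟨e3, i3⟩ | ⟨e3, i3⟩ <;>
    rcases min_cases c d with ⟨e4, i4⟩ | ⟨e4, i4⟩ <;>
      rw [e1, e2, e3, e4] at hov <;>
      first
        | exact absurd (le_antisymm i2 i1) hab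
        | exact absurd (le_antisymm i4 i3) hcd
        | (exfalso; linarith)
        | (rcases hov with ⟨o1, o2⟩ | ⟨o1, o2⟩ <;>
           rcases abs_cases (a - b) with ⟨f1, g1⟩ | ⟨f1, g1⟩ <;>
           rcases abs_cases (c - d) with ⟨f2, g2⟩ | ⟨f2, g2⟩ <;>
           rcases abs_cases (a - d) with ⟨f3, g3⟩ | ⟨f3, g3⟩ <;>
           rcases abs_cases (c - b) with ⟨f4, g4⟩ | ⟨f4, g4⟩ <;>
           rcases abs_cases (a - c) with ⟨f5, g5⟩ | ⟨f5, g5⟩ <;>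
           rcases abs_cases (b - d) with ⟨f6, g6⟩ | ⟨f6, g6⟩ <;>
             rw [f1, f2, f3, f4] at hE <;> rw [f1, f2, f5, f6] <;> linarith)

/-- Two treated units `t1, t2` and two controls `c1, c2` with distinct propensity
scores, where the grouping `{t1, c1}, {t2, c2}` is an optimal pair matching of
`{t1, t2}` to `{c1, c2}`.
(i) If the two pairs are not overlapping, then under every within-pair exchange
of treated and control roles (none, first only, second only, or both) the same
grouping remains an optimal pair matching of the new treated set to the new
control set.
(ii) If the two pairs are overlapping, the grouping remains optimal when neither
or both pairs have their roles exchanged, but it is not optimal when exactly one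
pair has its roles exchanged. -/
theorem two_pairs_overlap_permutation_optimality {α : Type*} [DecidableEq α]
    (score : α → ℝ) (t1 t2 c1 c2 : α)
    (h1 : score t1 ≠ score c1) (h2 : score t1 ≠ score t2) (h3 : score t1 ≠ score c2)
    (h4 : score c1 ≠ score t2) (h5 : score c1 ≠ score c2) (h6 : score t2 ≠ score c2)
    (μ : α → α) (hμ1 : μ t1 = c1) (hμ2 : μ t2 = c2)
    (hopt : IsOptimalMatching score {t1, t2} {c1, c2} μ) :
    (¬ Overlapping (score t1) (score c1) (score t2) (score c2) →
      ((∀ ν : α → α, ν t1 = c1 → ν t2 = c2 →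
          IsOptimalMatching score {t1, t2} {c1, c2} ν) ∧
       (∀ ν : α → α, ν c1 = t1 → ν t2 = c2 →
          IsOptimalMatching score {c1, t2} {t1, c2} ν) ∧
       (∀ ν : α → α, ν t1 = c1 → ν c2 = t2 →
          IsOptimalMatching score {t1, c2} {c1, t2} ν) ∧
       (∀ ν : α → α, ν c1 = t1 → ν c2 = t2 →
          IsOptimalMatching score {c1, c2} {t1, t2} ν))) ∧
    (Overlapping (score t1) (score c1) (score t2) (score c2) →
      ((∀ ν : α → α, ν t1 = c1 → ν t2 = c2 →
          IsOptimalMatching score {t1, t2} {c1, c2} ν) ∧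
       (∀ ν : α → α, ν c1 = t1 → ν c2 = t2 →
          IsOptimalMatching score {c1, c2} {t1, t2} ν) ∧
       (∀ ν : α → α, ν c1 = t1 → ν t2 = c2 →
          ¬ IsOptimalMatching score {c1, t2} {t1, c2} ν) ∧
       (∀ ν : α → α, ν t1 = c1 → ν c2 = t2 →
          ¬ IsOptimalMatching score {t1, c2} {c1, t2} ν))) := by

  have et1c1 : t1 ≠ c1 := fun e => h1 (congrArg score e)
  have et1t2 : t1 ≠ t2 := fun e => h2 (congrArg score e)
  have et1c2 : t1 ≠ c2 := fun e => h3 (congrArg score e)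
  have ec1t2 : c1 ≠ t2 := fun e => h4 (congrArg score e)
  have ec1c2 : c1 ≠ c2 := fun e => h5 (congrArg score e)
  have et2c2 : t2 ≠ c2 := fun e => h6 (congrArg score e)
  set a := score t1 with ha
  set b := score c1 with hb
  set c := score t2 with hc
  set d := score c2 with hd
  have hE : |a - b| + |c - d| ≤ |a - d| + |c - b| :=
    (opt_iff score et1t2 ec1c2 hμ1 hμ2).mp hopt
  have K := key_ineq a b c d h1 h2 h3 h4 h5 h6 hE
  refine ⟨fun hno => ⟨?_, ?_, ?_, ?_⟩, fun hov => ⟨?_, ?_, ?_, ?_⟩⟩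
  · intro ν hν1 hν2
    rw [opt_iff score et1t2 ec1c2 hν1 hν2]
    exact hE
  · intro ν hν1 hν2
    rw [opt_iff score ec1t2 et1c2 hν1 hν2]
    rw [show score c1 = b from rfl, show score t1 = a from rfl]
    rw [abs_sub_comm b a, abs_sub_comm c a]
    linarith [K.1 hno]
  · intro ν hν1 hν2
    rw [opt_iff score et1c2 ec1t2 hν1 hν2]
    rw [abs_sub_comm d c, abs_sub_comm d b]
    linarith [K.1 hno]
  · intro ν hν1 hν2
    rw [opt_iff score ec1c2 et1t2 hν1 hν2]
    rw [abs_sub_comm b a, abs_sub_comm d c, abs_sub_comm b c, abs_sub_comm d a]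
    linarith [hE]
  · intro ν hν1 hν2
    rw [opt_iff score et1t2 ec1c2 hν1 hν2]
    exact hE
  · intro ν hν1 hν2
    rw [opt_iff score ec1c2 et1t2 hν1 hν2]
    rw [abs_sub_comm b a, abs_sub_comm d c, abs_sub_comm b c, abs_sub_comm d a]
    linarith [hE]
  · intro ν hν1 hν2
    rw [opt_iff score ec1t2 et1c2 hν1 hν2, not_le]
    rw [abs_sub_comm b a, abs_sub_comm c a]
    linarith [K.2 hov]
  · intro ν hν1 hν2
    rw [opt_iff score et1c2 ec1t2 hν1 hν2, not_le]
    rw [abs_sub_comm d c, abs_sub_comm d b]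
    linarith [K.2 hov]
end

section
/- Let P₁, …, P_L be pairwise disjoint closed intervals of ℝ, and let T and C be finite disjoint sets of units with distinct real propensity scores, every score lying in ⋃ᵢ Pᵢ, such that for each i the number of treated units with score in Pᵢ equals the number of control units with score in Pᵢ (so in particular |T| = |C|). Then every optimal pair matching μ : T → C pairs units only within the same interval: for every t ∈ T, λ_t and λ_{μ(t)} belong to the same interval Pᵢ. -/
/-- If a matching has a crossing of a threshold `p` in one direction, and counts of
`p`-units among `T` and `C` agree, there is a crossing in the other direction. -/
private lemma exists_rev {α : Type*} [DecidableEq α] (T C : Finset α) (μ : α → α)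
    (hinj : Set.InjOn μ ↑T) (hmap : ∀ t ∈ T, μ t ∈ C)
    (p : α → Prop) [DecidablePred p]
    (hc : (T.filter p).card = (C.filter p).card)
    (hTC : T.card = C.card)
    (t1 : α) (ht1 : t1 ∈ T) (hp1 : p t1) (hq1 : ¬ p (μ t1)) :
    ∃ t2 ∈ T, ¬ p t2 ∧ p (μ t2) := by
  by_contra hcon
  push_neg at hcon
  have hsub : (T.filter (fun x => ¬ p x)).image μ ⊆ C.filter (fun x => ¬ p x) := by
    intro y hy
    simp only [Finset.mem_image, Finset.mem_filter] at hy ⊢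
    obtain ⟨x, ⟨hxT, hpx⟩, rfl⟩ := hy
    exact ⟨hmap x hxT, hcon x hxT hpx⟩
  have hcard : ((T.filter (fun x => ¬ p x)).image μ).card = (C.filter (fun x => ¬ p x)).card := by
    rw [Finset.card_image_of_injOn (hinj.mono (Finset.coe_subset.mpr (Finset.filter_subset _ T)))]
    have h1 := Finset.card_filter_add_card_filter_not (s := T) (p := p)
    have h2 := Finset.card_filter_add_card_filter_not (s := C) (p := p)
    omega
  have heq : (T.filter (fun x => ¬ p x)).image μ = C.filter (fun x => ¬ p x) :=
    Finset.eq_of_subset_of_card_le hsub (le_of_eq hcard.symm)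
  have hmem : μ t1 ∈ C.filter (fun x => ¬ p x) :=
    Finset.mem_filter.mpr ⟨hmap t1 ht1, hq1⟩
  rw [← heq] at hmem
  obtain ⟨x, hx, hxeq⟩ := Finset.mem_image.mp hmem
  have hxT := Finset.mem_filter.mp hx
  have : x = t1 := hinj (hxT.1) ht1 hxeq
  exact hxT.2 (this ▸ hp1)

/-- Decomposition of a filtered count over the intervals. -/
private lemma aux_card {α : Type*} [DecidableEq α] (score : α → ℝ) {L : ℕ} (lo hi : Fin L → ℝ)
    (hIdisj : ∀ i j, i ≠ j → Disjoint (Set.Icc (lo i) (hi i)) (Set.Icc (lo j) (hi j)))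
    (S : Finset α) (hcov : ∀ x ∈ S, ∃ i, score x ∈ Set.Icc (lo i) (hi i))
    (p : α → Prop) [DecidablePred p] (Q : Fin L → Prop) [DecidablePred Q]
    [inst : ∀ k : Fin L, DecidablePred (fun x : α => score x ∈ Set.Icc (lo k) (hi k))]
    (hpQ : ∀ x ∈ S, ∀ k, score x ∈ Set.Icc (lo k) (hi k) → (p x ↔ Q k)) :
    (S.filter p).card
      = ∑ k ∈ Finset.univ.filter Q,
          (S.filter (fun x => score x ∈ Set.Icc (lo k) (hi k))).card := by
  have hdec : S.filter p = (Finset.univ.filter Q).biUnion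
      (fun k => S.filter (fun x => score x ∈ Set.Icc (lo k) (hi k))) := by
    ext x
    simp only [Finset.mem_filter, Finset.mem_biUnion, Finset.mem_univ, true_and]
    constructor
    · rintro ⟨hxS, hpx⟩
      obtain ⟨k, hk⟩ := hcov x hxS
      exact ⟨k, (hpQ x hxS k hk).1 hpx, hxS, hk⟩
    · rintro ⟨k, hQk, hxS, hk⟩
      exact ⟨hxS, (hpQ x hxS k hk).2 hQk⟩
  rw [hdec, Finset.card_biUnion]
  intro k _ k' _ hkk'
  rw [Function.onFun, Finset.disjoint_left]
  intro x hx hx'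
  exact Set.disjoint_left.mp (hIdisj k k' hkk')
    (Finset.mem_filter.mp hx).2 (Finset.mem_filter.mp hx').2

/-- A point strictly between two disjoint intervals avoiding all intervals. -/
private lemma exists_gap {L : ℕ} (lo hi : Fin L → ℝ)
    (hIdisj : ∀ i j, i ≠ j → Disjoint (Set.Icc (lo i) (hi i)) (Set.Icc (lo j) (hi j)))
    (i j : Fin L) (hi_ne : lo i ≤ hi i) (hab : hi i < lo j) :
    ∃ g, hi i < g ∧ g < lo j ∧ ∀ k, g ∉ Set.Icc (lo k) (hi k) := by
  classical
  set S := Finset.univ.filter (fun k => hi i < lo k) with hS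
  have hjS : j ∈ S := by simp [hS, hab]
  have hne : (S.image lo).Nonempty := ⟨lo j, Finset.mem_image_of_mem lo hjS⟩
  set m := (S.image lo).min' hne with hm
  have hmem := (S.image lo).min'_mem hne
  obtain ⟨k0, hk0S, hk0⟩ := Finset.mem_image.mp hmem
  have him : hi i < m := by
    rw [hm, ← hk0]
    exact (Finset.mem_filter.mp hk0S).2
  have hmj : m ≤ lo j := Finset.min'_le _ _ (Finset.mem_image_of_mem lo hjS)
  refine ⟨(hi i + m) / 2, by linarith, by linarith, ?_⟩
  intro k hk
  rw [Set.mem_Icc] at hk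
  rcases le_or_gt (lo k) (hi i) with hle | hlt
  · by_cases hki : k = i
    · subst hki; linarith [hk.2]
    · have h1 : hi i ∈ Set.Icc (lo k) (hi k) := ⟨hle, by linarith [hk.2]⟩
      have h2 : hi i ∈ Set.Icc (lo i) (hi i) := ⟨hi_ne, le_refl _⟩
      exact Set.disjoint_left.mp (hIdisj k i hki) h1 h2
  · have hkS : k ∈ S := by simp [hS, hlt]
    have := Finset.min'_le (S.image lo) (lo k) (Finset.mem_image_of_mem lo hkS)
    linarith [hk.1]

/-- Swapping the partners of an up-crossing and a down-crossing pair strictly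
decreases the cost, contradicting optimality. -/
private lemma swap_contra {α : Type*} [DecidableEq α] (score : α → ℝ) (T C : Finset α)
    (μ : α → α) (hopt : IsOptimalMatching score T C μ) (g : ℝ) (t1 t2 : α)
    (ht1 : t1 ∈ T) (ht2 : t2 ∈ T)
    (h1 : score t1 < g) (h2 : g < score (μ t1))
    (h3 : g < score t2) (h4 : score (μ t2) < g) : False := by
  have hne : t1 ≠ t2 := by rintro rfl; linarith
  set ν : α → α := fun x => μ (Equiv.swap t1 t2 x) with hν
  have hswapT : ∀ x ∈ T, Equiv.swap t1 t2 x ∈ T := by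
    intro x hx
    rcases eq_or_ne x t1 with rfl | hx1
    · rw [Equiv.swap_apply_left]; exact ht2
    rcases eq_or_ne x t2 with rfl | hx2
    · rw [Equiv.swap_apply_right]; exact ht1
    · rw [Equiv.swap_apply_of_ne_of_ne hx1 hx2]; exact hx
  have hmatch : IsMatching T C ν := by
    constructor
    · intro x hx y hy hxy
      exact (Equiv.swap t1 t2).injective (hopt.1.1 (hswapT x hx) (hswapT y hy) hxy)
    · intro x hx; exact hopt.1.2 _ (hswapT x hx)
  have hle := hopt.2 ν hmatch
  have hν1 : ν t1 = μ t2 := by simp [hν]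
  have hν2 : ν t2 = μ t1 := by simp [hν]
  have hsum : matchCost score T μ - matchCost score T ν
      = ∑ t ∈ ({t1, t2} : Finset α),
          (|score t - score (μ t)| - |score t - score (ν t)|) := by
    rw [matchCost, matchCost, ← Finset.sum_sub_distrib]
    refine (Finset.sum_subset ?_ ?_).symm
    · exact Finset.insert_subset ht1 (Finset.singleton_subset_iff.mpr ht2)
    · intro x hxT hxn
      simp only [Finset.mem_insert, Finset.mem_singleton, not_or] at hxn
      have : ν x = μ x := by
        simp [hν, Equiv.swap_apply_of_ne_of_ne hxn.1 hxn.2]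
      rw [this, sub_self]
  rw [Finset.sum_pair hne, hν1, hν2] at hsum
  have e1 : |score t1 - score (μ t1)| = score (μ t1) - score t1 := by
    rw [abs_of_neg (by linarith : score t1 - score (μ t1) < 0)]; ring
  have e2 : |score t2 - score (μ t2)| = score t2 - score (μ t2) := by
    rw [abs_of_pos (by linarith : (0:ℝ) < score t2 - score (μ t2))]
  have e3 : |score t1 - score (μ t2)| < (g - score t1) + (g - score (μ t2)) := by
    rw [abs_sub_lt_iff]; constructor <;> linarith
  have e4 : |score t2 - score (μ t1)| < (score t2 - g) + (score (μ t1) - g) := by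
    rw [abs_sub_lt_iff]; constructor <;> linarith
  linarith

/-- Lemma S2: let `P i = [lo i, hi i]`, `i = 1, …, L`, be pairwise disjoint closed
intervals of `ℝ`, and let `T` and `C` be finite disjoint sets of units with
distinct propensity scores, every score lying in `⋃ᵢ P i`, such that for each `i`
the number of treated units with score in `P i` equals the number of control units
with score in `P i`. Then every optimal pair matching of `T` to `C` pairs units
only within the same interval. -/
theorem optimal_match_respects_disjoint_intervals {α : Type*} [DecidableEq α]
    (score : α → ℝ) (T C : Finset α)
    (hdisj : Disjoint T C)
    (hinj : Set.InjOn score (↑T ∪ ↑C))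
    (L : ℕ) (lo hi : Fin L → ℝ)
    (hIdisj : ∀ i j, i ≠ j → Disjoint (Set.Icc (lo i) (hi i)) (Set.Icc (lo j) (hi j)))
    (hcover : ∀ x, x ∈ T ∪ C → ∃ i, score x ∈ Set.Icc (lo i) (hi i))
    (hcount : ∀ i,
      ({x | x ∈ T ∧ score x ∈ Set.Icc (lo i) (hi i)} : Set α).ncard =
        ({x | x ∈ C ∧ score x ∈ Set.Icc (lo i) (hi i)} : Set α).ncard)
    (μ : α → α) (hopt : IsOptimalMatching score T C μ) :
    ∀ t ∈ T, ∃ i, score t ∈ Set.Icc (lo i) (hi i) ∧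
      score (μ t) ∈ Set.Icc (lo i) (hi i) := by
  classical
  have hcovT : ∀ x ∈ T, ∃ i, score x ∈ Set.Icc (lo i) (hi i) :=
    fun x hx => hcover x (Finset.mem_union_left _ hx)
  have hcovC : ∀ x ∈ C, ∃ i, score x ∈ Set.Icc (lo i) (hi i) :=
    fun x hx => hcover x (Finset.mem_union_right _ hx)
  -- counts per interval as Finset cards
  have hcount' : ∀ k, (T.filter (fun x => score x ∈ Set.Icc (lo k) (hi k))).card
      = (C.filter (fun x => score x ∈ Set.Icc (lo k) (hi k))).card := by
    intro k
    have h := hcount k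
    have e1 : {x | x ∈ T ∧ score x ∈ Set.Icc (lo k) (hi k)}
        = ↑(T.filter (fun x => score x ∈ Set.Icc (lo k) (hi k))) := by ext x; simp
    have e2 : {x | x ∈ C ∧ score x ∈ Set.Icc (lo k) (hi k)}
        = ↑(C.filter (fun x => score x ∈ Set.Icc (lo k) (hi k))) := by ext x; simp
    rwa [e1, e2, Set.ncard_coe_finset, Set.ncard_coe_finset] at h
  -- total counts
  have hTC : T.card = C.card := by
    have hT := aux_card score lo hi hIdisj T hcovT (fun _ => True) (fun _ => True)
      (by intro x _ k _; simp)
    have hC := aux_card score lo hi hIdisj C hcovC (fun _ => True) (fun _ => True)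
      (by intro x _ k _; simp)
    rw [Finset.filter_true] at hT hC
    rw [hT, hC]
    exact Finset.sum_congr rfl (fun k _ => hcount' k)
  -- counts below an interval-avoiding threshold
  have hcountg : ∀ g : ℝ, (∀ k, g ∉ Set.Icc (lo k) (hi k)) →
      (T.filter (fun x => score x < g)).card = (C.filter (fun x => score x < g)).card := by
    intro g hg
    have hpQ : ∀ (S : Finset α), ∀ x ∈ S, ∀ k, score x ∈ Set.Icc (lo k) (hi k) →
        (score x < g ↔ hi k < g) := by
      intro S x _ k hk
      constructor
      · intro hlt
        by_contra hge
        push_neg at hge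
        exact hg k ⟨le_trans hk.1 (le_of_lt hlt), hge⟩
      · intro hki; exact lt_of_le_of_lt hk.2 hki
    have hT := aux_card score lo hi hIdisj T hcovT (fun x => score x < g)
      (fun k => hi k < g) (hpQ T)
    have hC := aux_card score lo hi hIdisj C hcovC (fun x => score x < g)
      (fun k => hi k < g) (hpQ C)
    rw [hT, hC]
    exact Finset.sum_congr rfl (fun k _ => hcount' k)
  -- no score equals an interval-avoiding threshold
  have hgne : ∀ g : ℝ, (∀ k, g ∉ Set.Icc (lo k) (hi k)) →
      ∀ x ∈ T ∪ C, score x ≠ g := by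
    intro g hg x hx heq
    obtain ⟨k, hk⟩ := hcover x hx
    rw [heq] at hk
    exact hg k hk
  -- counts above the threshold
  have hcountg' : ∀ g : ℝ, (∀ k, g ∉ Set.Icc (lo k) (hi k)) →
      (T.filter (fun x => g < score x)).card = (C.filter (fun x => g < score x)).card := by
    intro g hg
    have key : ∀ S : Finset α, S ⊆ T ∪ C →
        (S.filter (fun x => g < score x)).card
          = S.card - (S.filter (fun x => score x < g)).card := by
      intro S hS
      have hsplit := Finset.card_filter_add_card_filter_not
        (s := S) (p := fun x => score x < g)
      have hcg : S.filter (fun x => ¬ score x < g) = S.filter (fun x => g < score x) :=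
        Finset.filter_congr (fun x hx => by
          simp only [not_lt]
          exact ⟨fun h => lt_of_le_of_ne h (Ne.symm (hgne g hg x (hS hx))), le_of_lt⟩)
      rw [← hcg]
      omega
    rw [key T Finset.subset_union_left, key C Finset.subset_union_right,
      hTC, hcountg g hg]
  -- main argument
  intro t ht
  by_contra hcon
  push_neg at hcon
  have hμt : μ t ∈ C := hopt.1.2 t ht
  obtain ⟨i, hi_t⟩ := hcovT t ht
  obtain ⟨j, hj_t⟩ := hcovC (μ t) hμt
  have hij : i ≠ j := by rintro rfl; exact hcon i hi_t hj_t
  have hii : lo i ≤ hi i := le_trans hi_t.1 hi_t.2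
  have hjj : lo j ≤ hi j := le_trans hj_t.1 hj_t.2
  have horder : hi i < lo j ∨ hi j < lo i := by
    by_contra hcc
    push_neg at hcc
    obtain ⟨h1, h2⟩ := hcc
    have hx : max (lo i) (lo j) ∈ Set.Icc (lo i) (hi i) := ⟨le_max_left _ _, max_le hii h1⟩
    have hx' : max (lo i) (lo j) ∈ Set.Icc (lo j) (hi j) := ⟨le_max_right _ _, max_le h2 hjj⟩
    exact Set.disjoint_left.mp (hIdisj i j hij) hx hx'
  rcases horder with hor | hor
  · -- t below the gap, μ t above
    obtain ⟨g, hg1, hg2, hg⟩ := exists_gap lo hi hIdisj i j hii hor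
    have hp1 : score t < g := lt_of_le_of_lt hi_t.2 hg1
    have hq1 : g < score (μ t) := lt_of_lt_of_le hg2 hj_t.1
    obtain ⟨t2, ht2, hnp, hpμ⟩ := exists_rev T C μ hopt.1.1 hopt.1.2
      (fun x => score x < g) (hcountg g hg) hTC t ht hp1 (not_lt.mpr (le_of_lt hq1))
    have h3 : g < score t2 :=
      lt_of_le_of_ne (not_lt.mp hnp)
        (Ne.symm (hgne g hg t2 (Finset.mem_union_left _ ht2)))
    exact swap_contra score T C μ hopt g t t2 ht ht2 hp1 hq1 h3 hpμ
  · -- t above the gap, μ t below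
    obtain ⟨g, hg1, hg2, hg⟩ := exists_gap lo hi hIdisj j i hjj hor
    have hp1 : g < score t := lt_of_lt_of_le hg2 hi_t.1
    have hq1 : score (μ t) < g := lt_of_le_of_lt hj_t.2 hg1
    obtain ⟨t2, ht2, hnp, hpμ⟩ := exists_rev T C μ hopt.1.1 hopt.1.2
      (fun x => g < score x) (hcountg' g hg) hTC t ht hp1 (not_lt.mpr (le_of_lt hq1))
    have h3 : score t2 < g :=
      lt_of_le_of_ne (not_lt.mp hnp) (hgne g hg t2 (Finset.mem_union_left _ ht2))
    exact swap_contra score T C μ hopt g t2 t ht2 ht h3 hpμ hp1 hq1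
end

section
/- Given a finite collection of matched pairs of units with distinct real propensity scores, associate to each connected component of the overlap graph the closed interval from the minimum to the maximum propensity score among all units in the pairs of that component. Then the intervals associated with distinct connected components are pairwise disjoint. -/
/-- The overlap graph of a collection of matched pairs (indexed by `ι`, with the
two propensity scores of pair `i` given by `hi i` and `lo i`): vertices are the
pairs, with an edge between two distinct pairs exactly when they overlap. -/
def overlapGraph {ι : Type*} (hi lo : ι → ℝ) : SimpleGraph ι :=
  SimpleGraph.fromRel fun i j => Overlapping (hi i) (lo i) (hi j) (lo j)

/-- The set of propensity scores of units appearing in pairs belonging to the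
connected component `c` of the overlap graph. -/
def componentScores {ι : Type*} (hi lo : ι → ℝ)
    (c : (overlapGraph hi lo).ConnectedComponent) : Set ℝ :=
  {x | ∃ i, (overlapGraph hi lo).connectedComponentMk i = c ∧ (x = hi i ∨ x = lo i)}

/-- The closed interval from the minimum to the maximum propensity score among
all units in the pairs of the connected component `c`. -/
noncomputable def componentInterval {ι : Type*} (hi lo : ι → ℝ)
    (c : (overlapGraph hi lo).ConnectedComponent) : Set ℝ :=
  Set.Icc (sInf (componentScores hi lo c)) (sSup (componentScores hi lo c))

section Aux
variable {ι : Type*} {hi lo : ι → ℝ}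

lemma adj_of_common (hpair : ∀ i, lo i < hi i) (hdistinct : ∀ i j, i ≠ j →
      hi i ≠ hi j ∧ hi i ≠ lo j ∧ lo i ≠ hi j ∧ lo i ≠ lo j)
    {k m : ι} (hkm : k ≠ m) {x : ℝ}
    (h1 : lo k ≤ x) (h2 : x ≤ hi k) (h3 : lo m ≤ x) (h4 : x ≤ hi m) :
    (overlapGraph hi lo).Adj k m := by
  have e1 : max (hi k) (lo k) = hi k := max_eq_left (hpair k).le
  have e2 : min (hi k) (lo k) = lo k := min_eq_right (hpair k).le
  have e3 : max (hi m) (lo m) = hi m := max_eq_left (hpair m).le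
  have e4 : min (hi m) (lo m) = lo m := min_eq_right (hpair m).le
  refine (SimpleGraph.fromRel_adj _ k m).mpr ⟨hkm, Or.inl ?_⟩
  unfold Overlapping
  rw [e1, e2, e3, e4]
  rcases lt_trichotomy (hi k) (hi m) with h | h | h
  · exact Or.inr ⟨h, lt_of_le_of_ne (h3.trans h2) (Ne.symm (hdistinct k m hkm).2.1)⟩
  · exact absurd h (hdistinct k m hkm).1
  · exact Or.inl ⟨h, lt_of_le_of_ne (h1.trans h4) (Ne.symm (hdistinct m k hkm.symm).2.1)⟩

lemma walk_below (hpair : ∀ i, lo i < hi i) {x : ℝ} {i j : ι} (w : (overlapGraph hi lo).Walk i j)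
    (hall : ∀ k, (overlapGraph hi lo).connectedComponentMk k =
      (overlapGraph hi lo).connectedComponentMk i → hi k < x ∨ x < lo k)
    (hx : hi i < x) : hi j < x := by
  induction w with
  | nil => exact hx
  | @cons a b j hab p ih =>
    have hccb : (overlapGraph hi lo).connectedComponentMk b =
        (overlapGraph hi lo).connectedComponentMk a :=
      (SimpleGraph.ConnectedComponent.sound hab.reachable).symm
    have hb : hi b < x ∨ x < lo b := hall b hccb
    have hb' : hi b < x := by
      rcases hb with hb | hb
      · exact hb
      · -- contradiction: a below x, b above x, but adjacent
        exfalso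
        rcases (SimpleGraph.fromRel_adj _ a b).mp hab with ⟨_, ho⟩
        have e1 : max (hi a) (lo a) = hi a := max_eq_left (hpair a).le
        have e2 : min (hi a) (lo a) = lo a := min_eq_right (hpair a).le
        have e3 : max (hi b) (lo b) = hi b := max_eq_left (hpair b).le
        have e4 : min (hi b) (lo b) = lo b := min_eq_right (hpair b).le
        have hab' : hi a < lo b := hx.trans hb
        rcases ho with ho | ho <;> unfold Overlapping at ho <;>
          rw [e1, e2, e3, e4] at ho
        · rcases ho with ⟨h1, h2⟩ | ⟨h1, h2⟩
          · exact absurd h1 (not_lt.mpr (hab'.trans (hpair b)).le)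
          · exact absurd h2 (not_lt.mpr hab'.le)
        · rcases ho with ⟨h1, h2⟩ | ⟨h1, h2⟩
          · exact absurd h2 (not_lt.mpr hab'.le)
          · exact absurd h1 (not_lt.mpr (hab'.trans (hpair b)).le)
    have hall' : ∀ k, (overlapGraph hi lo).connectedComponentMk k =
        (overlapGraph hi lo).connectedComponentMk b → hi k < x ∨ x < lo k := by
      intro k hk; exact hall k (hk.trans hccb)
    exact ih hall' hb'
end Aux


lemma cover {ι : Type*} [Fintype ι] {hi lo : ι → ℝ} (hpair : ∀ i, lo i < hi i)
    {c : (overlapGraph hi lo).ConnectedComponent} {x : ℝ}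
    (hx : x ∈ componentInterval hi lo c) :
    ∃ k, (overlapGraph hi lo).connectedComponentMk k = c ∧ lo k ≤ x ∧ x ≤ hi k := by
  by_contra hcon
  push_neg at hcon
  have hall : ∀ k, (overlapGraph hi lo).connectedComponentMk k = c →
      hi k < x ∨ x < lo k := by
    intro k hk
    rcases le_or_gt (lo k) x with h1 | h1
    · exact Or.inl (lt_of_not_ge fun h2 => absurd (hcon k hk h1) (not_lt.mpr h2))
    · exact Or.inr h1
  have hfin : (componentScores hi lo c).Finite := by
    apply Set.Finite.subset ((Set.finite_range hi).union (Set.finite_range lo))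
    rintro y ⟨i, _, rfl | rfl⟩
    · exact Or.inl ⟨i, rfl⟩
    · exact Or.inr ⟨i, rfl⟩
  have hne : (componentScores hi lo c).Nonempty := by
    obtain ⟨v, hv⟩ := c.exists_rep
    exact ⟨hi v, v, hv, Or.inl rfl⟩
  obtain ⟨i0, hci0, hi0⟩ := hne.csInf_mem hfin
  obtain ⟨i1, hci1, hi1⟩ := hne.csSup_mem hfin
  have hlo0 : lo i0 ≤ sInf (componentScores hi lo c) := by
    rcases hi0 with h | h
    · exact ((hpair i0).le.trans h.ge)
    · exact h.ge
  have hhi1 : sSup (componentScores hi lo c) ≤ hi i1 := by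
    rcases hi1 with h | h
    · exact h.le
    · exact h.le.trans (hpair i1).le
  have hx1 : lo i0 ≤ x := hlo0.trans hx.1
  have hx2 : x ≤ hi i1 := hx.2.trans hhi1
  have hi0x : hi i0 < x := by
    rcases hall i0 hci0 with h | h
    · exact h
    · exact absurd hx1 (not_le.mpr h)
  have hreach : (overlapGraph hi lo).Reachable i0 i1 :=
    SimpleGraph.ConnectedComponent.exact (hci0.trans hci1.symm)
  obtain ⟨w⟩ := hreach
  have := walk_below hpair w (fun k hk => hall k (hk.trans hci0)) hi0x
  exact absurd hx2 (not_le.mpr this)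


/-- Given a finite collection of matched pairs of units with distinct propensity
scores, the closed intervals spanned by distinct connected components of the
overlap graph are pairwise disjoint. -/
theorem component_intervals_pairwise_disjoint {ι : Type*} [Fintype ι]
    (hi lo : ι → ℝ) (hpair : ∀ i, lo i < hi i)
    (hdistinct : ∀ i j, i ≠ j →
      hi i ≠ hi j ∧ hi i ≠ lo j ∧ lo i ≠ hi j ∧ lo i ≠ lo j)
    (c d : (overlapGraph hi lo).ConnectedComponent) (hcd : c ≠ d) :
    Disjoint (componentInterval hi lo c) (componentInterval hi lo d) := by
  rw [Set.disjoint_left]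
  intro x hxc hxd
  obtain ⟨k, hkc, hk1, hk2⟩ := cover hpair hxc
  obtain ⟨m, hmd, hm1, hm2⟩ := cover hpair hxd
  have hkm : k ≠ m := by
    rintro rfl
    exact hcd (hkc.symm.trans hmd)
  have hadj := adj_of_common hpair hdistinct hkm hk1 hk2 hm1 hm2
  exact hcd (hkc.symm.trans ((SimpleGraph.ConnectedComponent.sound hadj.reachable).trans hmd))
end

section
/- One-control-swap sufficiency (Lemma S3): let T and C be finite disjoint sets of units with distinct real propensity scores and |C| ≥ |T|, let f(μ) = Σ_{t∈T} |λ_t − λ_{μ(t)}| be the cost of an injection μ : T → C, and let μ* : T → C be an injection with range C* = μ*(T). Suppose that no injection μ with range exactly C* satisfies f(μ) < f(μ*). Then there exists an injection μ : T → C with f(μ) < f(μ*) if and only if there exists an injection μ : T → C with f(μ) < f(μ*) whose range differs from C* by at most one element, i.e. |μ(T) ∖ C*| ≤ 1. -/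
theorem aux_swap {α : Type*} [DecidableEq α]
    (score : α → ℝ) (T C : Finset α)
    (μstar : α → α) (hμstar : IsMatching T C μstar) :
    ∀ n : ℕ, ∀ μ : α → α, IsMatching T C μ →
      matchCost score T μ < matchCost score T μstar →
      (T.image μ \ T.image μstar).card ≤ n →
      ∃ μ' : α → α, IsMatching T C μ' ∧
        (T.image μ' \ T.image μstar).card ≤ 1 ∧
        matchCost score T μ' < matchCost score T μstar := by
  intro n
  induction n with
  | zero => intro μ hμ hlt hc; exact ⟨μ, hμ, hc.trans (Nat.zero_le 1), hlt⟩
  | succ n ih =>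
    intro μ hμ hlt hcard
    by_cases h1 : (T.image μ \ T.image μstar).card ≤ 1
    · exact ⟨μ, hμ, h1, hlt⟩
    classical
    have hne : (T.image μ \ T.image μstar).Nonempty := by
      rw [Finset.nonempty_iff_ne_empty]
      intro h; rw [h] at h1; simp at h1
    obtain ⟨c, hc⟩ := hne
    rw [Finset.mem_sdiff] at hc
    obtain ⟨hcμ, hcns⟩ := hc
    haveI : Nonempty α := ⟨c⟩
    set ψ := Function.invFunOn μ ↑T with hψdef
    have hψ1 : ∀ x ∈ T.image μ, ψ x ∈ T ∧ μ (ψ x) = x := by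
      intro x hx
      rw [Finset.mem_image] at hx
      obtain ⟨a, ha, hax⟩ := hx
      have h := Function.invFunOn_pos (f := μ) (s := ↑T) ⟨a, Finset.mem_coe.mpr ha, hax⟩
      exact ⟨Finset.mem_coe.mp h.1, h.2⟩
    set t0 := ψ c with ht0def
    have ht0T : t0 ∈ T := (hψ1 c hcμ).1
    have hμt0 : μ t0 = c := (hψ1 c hcμ).2
    set φ := fun t => ψ (μstar t) with hφdef
    set p : α → Prop :=
      fun t => ∃ k : ℕ, (∀ m < k, μstar (φ^[m] t0) ∈ T.image μ) ∧ φ^[k] t0 = t with hpdef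
    have pt0 : p t0 := ⟨0, fun m hm => absurd hm (Nat.not_lt_zero m), rfl⟩
    have hpT : ∀ t, p t → t ∈ T := by
      intro t hpt
      simp only [hpdef] at hpt
      obtain ⟨k, hch, hk⟩ := hpt
      subst hk
      cases k with
      | zero => exact ht0T
      | succ k =>
        rw [Function.iterate_succ_apply']
        exact (hψ1 _ (hch k (Nat.lt_succ_self k))).1
    have hpred : ∀ t, p t → t ≠ t0 → ∃ s, p s ∧ μ t = μstar s := by
      intro t hpt hne
      simp only [hpdef] at hpt
      obtain ⟨k, hch, hk⟩ := hpt
      subst hk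
      cases k with
      | zero => exact absurd rfl hne
      | succ k =>
        refine ⟨φ^[k] t0, ⟨k, fun m hm => hch m (hm.trans (Nat.lt_succ_self k)), rfl⟩, ?_⟩
        rw [Function.iterate_succ_apply']
        exact (hψ1 _ (hch k (Nat.lt_succ_self k))).2
    have hclos : ∀ t, p t → μstar t ∈ T.image μ → p (φ t) := by
      intro t hpt hmem
      simp only [hpdef] at hpt ⊢
      obtain ⟨k, hch, hk⟩ := hpt
      subst hk
      refine ⟨k + 1, ?_, Function.iterate_succ_apply' φ k t0⟩
      intro m hm
      rcases Nat.lt_succ_iff_lt_or_eq.mp hm with h | h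
      · exact hch m h
      · subst h; exact hmem
    have hkey : ∀ a, p a → ∀ b ∈ T, ¬ p b → μ a ≠ μstar b := by
      intro a hpa b hbT hpb heq
      by_cases ha0 : a = t0
      · subst ha0
        rw [hμt0] at heq
        exact hcns (Finset.mem_image.mpr ⟨b, hbT, heq.symm⟩)
      · obtain ⟨s, hps, hs⟩ := hpred a hpa ha0
        rw [hs] at heq
        have hsb : s = b :=
          hμstar.1 (Finset.mem_coe.mpr (hpT s hps)) (Finset.mem_coe.mpr hbT) heq
        exact hpb (hsb ▸ hps)
    have hkey2 : ∀ a, p a → ∀ b ∈ T, ¬ p b → μstar a ≠ μ b := by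
      intro a hpa b hbT hpb heq
      have hmem : μstar a ∈ T.image μ := heq ▸ Finset.mem_image_of_mem μ hbT
      have hpφ := hclos a hpa hmem
      have hμφ : μ (φ a) = μstar a := (hψ1 _ hmem).2
      have hφb : φ a = b :=
        hμ.1 (Finset.mem_coe.mpr (hpT _ hpφ)) (Finset.mem_coe.mpr hbT) (by rw [hμφ, heq])
      exact hpb (hφb ▸ hpφ)
    set μ1 : α → α := fun t => if p t then μ t else μstar t with hμ1def
    set μ2 : α → α := fun t => if p t then μstar t else μ t with hμ2def
    have hμ1M : IsMatching T C μ1 := by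
      constructor
      · intro a haT b hbT heq
        simp only [hμ1def] at heq
        by_cases hpa : p a <;> by_cases hpb : p b
        · rw [if_pos hpa, if_pos hpb] at heq; exact hμ.1 haT hbT heq
        · rw [if_pos hpa, if_neg hpb] at heq
          exact absurd heq (hkey a hpa b (Finset.mem_coe.mp hbT) hpb)
        · rw [if_neg hpa, if_pos hpb] at heq
          exact absurd heq.symm (hkey b hpb a (Finset.mem_coe.mp haT) hpa)
        · rw [if_neg hpa, if_neg hpb] at heq; exact hμstar.1 haT hbT heq
      · intro t ht
        simp only [hμ1def]
        by_cases hpt : p t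
        · rw [if_pos hpt]; exact hμ.2 t ht
        · rw [if_neg hpt]; exact hμstar.2 t ht
    have hμ2M : IsMatching T C μ2 := by
      constructor
      · intro a haT b hbT heq
        simp only [hμ2def] at heq
        by_cases hpa : p a <;> by_cases hpb : p b
        · rw [if_pos hpa, if_pos hpb] at heq; exact hμstar.1 haT hbT heq
        · rw [if_pos hpa, if_neg hpb] at heq
          exact absurd heq (hkey2 a hpa b (Finset.mem_coe.mp hbT) hpb)
        · rw [if_neg hpa, if_pos hpb] at heq
          exact absurd heq.symm (hkey2 b hpb a (Finset.mem_coe.mp haT) hpa)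
        · rw [if_neg hpa, if_neg hpb] at heq; exact hμ.1 haT hbT heq
      · intro t ht
        simp only [hμ2def]
        by_cases hpt : p t
        · rw [if_pos hpt]; exact hμstar.2 t ht
        · rw [if_neg hpt]; exact hμ.2 t ht
    have hsum : matchCost score T μ1 + matchCost score T μ2
        = matchCost score T μ + matchCost score T μstar := by
      simp only [matchCost, ← Finset.sum_add_distrib]
      apply Finset.sum_congr rfl
      intro t _
      simp only [hμ1def, hμ2def]
      by_cases hpt : p t
      · rw [if_pos hpt, if_pos hpt]
      · rw [if_neg hpt, if_neg hpt]; ring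
    have himg1 : T.image μ1 \ T.image μstar ⊆ {c} := by
      intro x hx
      rw [Finset.mem_sdiff, Finset.mem_image] at hx
      obtain ⟨⟨t, htT, hxt⟩, hxs⟩ := hx
      simp only [hμ1def] at hxt
      by_cases hpt : p t
      · rw [if_pos hpt] at hxt
        by_cases ht0' : t = t0
        · subst ht0'
          rw [hμt0] at hxt
          simp [← hxt]
        · obtain ⟨s, hps, hs⟩ := hpred t hpt ht0'
          rw [hs] at hxt
          exact absurd (Finset.mem_image.mpr ⟨s, hpT s hps, hxt⟩) hxs
      · rw [if_neg hpt] at hxt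
        exact absurd (Finset.mem_image.mpr ⟨t, htT, hxt⟩) hxs
    have himg2 : T.image μ2 \ T.image μstar ⊆ (T.image μ \ T.image μstar).erase c := by
      intro x hx
      rw [Finset.mem_sdiff, Finset.mem_image] at hx
      obtain ⟨⟨t, htT, hxt⟩, hxs⟩ := hx
      simp only [hμ2def] at hxt
      by_cases hpt : p t
      · rw [if_pos hpt] at hxt
        exact absurd (Finset.mem_image.mpr ⟨t, htT, hxt⟩) hxs
      · rw [if_neg hpt] at hxt
        rw [Finset.mem_erase]
        refine ⟨?_, Finset.mem_sdiff.mpr ⟨Finset.mem_image.mpr ⟨t, htT, hxt⟩, hxs⟩⟩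
        intro hxc
        subst hxc
        have htt0 : t = t0 :=
          hμ.1 (Finset.mem_coe.mpr htT) (Finset.mem_coe.mpr ht0T) (by rw [hxt, hμt0])
        exact hpt (htt0 ▸ pt0)
    have hcard2 : (T.image μ2 \ T.image μstar).card ≤ n := by
      have h := Finset.card_le_card himg2
      have he : ((T.image μ \ T.image μstar).erase c).card
          = (T.image μ \ T.image μstar).card - 1 :=
        Finset.card_erase_of_mem (Finset.mem_sdiff.mpr ⟨hcμ, hcns⟩)
      have hcge : 1 ≤ (T.image μ \ T.image μstar).card :=
        Finset.card_pos.mpr ⟨c, Finset.mem_sdiff.mpr ⟨hcμ, hcns⟩⟩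
      omega
    by_cases hlt1 : matchCost score T μ1 < matchCost score T μstar
    · exact ⟨μ1, hμ1M, (Finset.card_le_card himg1).trans (by simp), hlt1⟩
    · push_neg at hlt1
      have hlt2 : matchCost score T μ2 < matchCost score T μstar := by linarith
      exact ih μ2 hμ2M hlt2 hcard2

/-- One-control-swap sufficiency (Lemma S3): let `T` and `C` be finite disjoint
sets of units with distinct propensity scores and `|C| ≥ |T|`, and let `μ*` be a
pair matching of `T` to `C` with range (matched control set) `C* = μ*(T)`.
Suppose no pair matching with range exactly `C*` has strictly smaller cost than
`μ*`. Then there is a pair matching with strictly smaller cost than `μ*` if and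
only if there is one whose range differs from `C*` by at most one control. -/
theorem one_control_swap_sufficiency {α : Type*} [DecidableEq α]
    (score : α → ℝ) (T C : Finset α)
    (hdisj : Disjoint T C)
    (hinj : Set.InjOn score (↑T ∪ ↑C))
    (hcard : T.card ≤ C.card)
    (μstar : α → α) (hμstar : IsMatching T C μstar)
    (hbest : ∀ μ : α → α, IsMatching T C μ → T.image μ = T.image μstar →
      matchCost score T μstar ≤ matchCost score T μ) :
    (∃ μ : α → α, IsMatching T C μ ∧
        matchCost score T μ < matchCost score T μstar)
      ↔ (∃ μ : α → α, IsMatching T C μ ∧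
          (T.image μ \ T.image μstar).card ≤ 1 ∧
          matchCost score T μ < matchCost score T μstar) := by
  constructor
  · rintro ⟨μ, hμ, hlt⟩
    exact aux_swap score T C μstar hμstar _ μ hμ hlt le_rfl
  · rintro ⟨μ, hμ, _, hlt⟩
    exact ⟨μ, hμ, hlt⟩
end
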